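/- There exists a constant c > 0 such that for every s ∈ (0,1], ∑_{m ∈ ℤ³, m ≠ 0} e^{−|m|² s} / |m|² ≤ c s^{−1/2}. -/

import Mathlib

open Set
open scoped ENNReal

/-- Euclidean norm of a point of `ℤ³`. -/
noncomputable def znorm (m : ℤ × ℤ × ℤ) : ℝ :=
  Real.sqrt ((m.1 : ℝ) ^ 2 + (m.2.1 : ℝ) ^ 2 + (m.2.2 : ℝ) ^ 2)

noncomputable def Tr (u : ℝ) : ℝ := ∑' k : ℕ, Real.exp (-(((k : ℝ) + 1) ^ 2 * u))

lemma exp_pow_ineq {u : ℝ} (hu : 0 < u) (k : ℕ) :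
    Real.exp (-(((k : ℝ) + 1) ^ 2 * u)) ≤ Real.exp (-u) ^ (k + 1) := by
  rw [← Real.exp_nat_mul]
  apply Real.exp_le_exp.mpr
  have h1 : (0:ℝ) ≤ (k:ℝ) := Nat.cast_nonneg k
  push_cast
  nlinarith [mul_nonneg (mul_nonneg h1 (by linarith : (0:ℝ) ≤ (k:ℝ)+1)) hu.le]

lemma Tr_summable {u : ℝ} (hu : 0 < u) :
    Summable (fun k : ℕ => Real.exp (-(((k : ℝ) + 1) ^ 2 * u))) := by
  have hr0 : (0:ℝ) ≤ Real.exp (-u) := (Real.exp_pos _).le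
  have hr1 : Real.exp (-u) < 1 := Real.exp_lt_one_iff.mpr (by linarith)
  refine Summable.of_nonneg_of_le (fun k => (Real.exp_pos _).le)
    (fun k => exp_pow_ineq hu k) ?_
  exact (summable_geometric_of_lt_one hr0 hr1).comp_injective (add_left_injective 1)

lemma tsum_geom_shift {r : ℝ} (h0 : 0 ≤ r) (h1 : r < 1) :
    ∑' k : ℕ, r ^ (k + 1) = r / (1 - r) := by
  have : (fun k : ℕ => r ^ (k+1)) = fun k => r * r ^ k := by
    funext k; ring
  rw [this, tsum_mul_left, tsum_geometric_of_lt_one h0 h1, div_eq_mul_inv]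

lemma Tr_nonneg (u : ℝ) : 0 ≤ Tr u :=
  tsum_nonneg fun k => (Real.exp_pos _).le

lemma exp_sub_one_ge_cube {u : ℝ} (hu : 0 ≤ u) : u ^ 3 / 27 ≤ Real.exp u - 1 := by
  have h3 : Real.exp u = Real.exp (u/3) ^ 3 := by
    rw [← Real.exp_nat_mul]; ring_nf
  have h := Real.add_one_le_exp (u/3)
  have h0 : (0:ℝ) ≤ u/3 + 1 := by linarith
  nlinarith [pow_le_pow_left₀ h0 h 3]

lemma Tr_le_geom {u : ℝ} (hu : 0 < u) : Tr u ≤ 1 / (Real.exp u - 1) := by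
  have hr0 : (0:ℝ) ≤ Real.exp (-u) := (Real.exp_pos _).le
  have hr1 : Real.exp (-u) < 1 := Real.exp_lt_one_iff.mpr (by linarith)
  have hsum : Summable (fun k : ℕ => Real.exp (-u) ^ (k+1)) :=
    (summable_geometric_of_lt_one hr0 hr1).comp_injective (add_left_injective 1)
  have h1 : Tr u ≤ ∑' k : ℕ, Real.exp (-u) ^ (k+1) :=
    Summable.tsum_le_tsum (fun k => exp_pow_ineq hu k) (Tr_summable hu) hsum
  rw [tsum_geom_shift hr0 hr1] at h1
  have he : 0 < Real.exp u - 1 := by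
    have := Real.add_one_le_exp u; nlinarith [Real.exp_pos u]
  have heq : Real.exp (-u) / (1 - Real.exp (-u)) = 1 / (Real.exp u - 1) := by
    rw [div_eq_div_iff (by nlinarith [Real.exp_neg u, Real.exp_pos u] : (0:ℝ) < 1 - Real.exp (-u)).ne' he.ne', Real.exp_neg u]
    have hep : Real.exp u ≠ 0 := (Real.exp_pos u).ne'
    field_simp
  linarith [heq ▸ h1]

lemma Tr_le_inv {u : ℝ} (hu : 0 < u) : Tr u ≤ 1 / u := by
  have h := Tr_le_geom hu
  have he : 0 < Real.exp u - 1 := by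
    have := Real.add_one_le_exp u; nlinarith [Real.exp_pos u]
  have : 1 / (Real.exp u - 1) ≤ 1 / u := by
    apply one_div_le_one_div_of_le hu
    have := Real.add_one_le_exp u; linarith
  linarith

lemma Tr_le_cube {u : ℝ} (hu : 0 < u) : Tr u ≤ 27 / u ^ 3 := by
  have h := Tr_le_geom hu
  have hc := exp_sub_one_ge_cube hu.le
  have he : 0 < u ^ 3 / 27 := by positivity
  have : 1 / (Real.exp u - 1) ≤ 1 / (u ^ 3 / 27) :=
    one_div_le_one_div_of_le he hc
  rw [one_div_div] at this
  linarith

lemma inv_one_sub_exp_le {x : ℝ} (hx : 0 < x) :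
    (1 - Real.exp (-x))⁻¹ ≤ Real.exp x / x := by
  have h3 := Real.exp_pos x
  have h := Real.add_one_le_exp x
  have he : 0 < Real.exp x - 1 := by linarith
  have heq : 1 - Real.exp (-x) = (Real.exp x - 1) / Real.exp x := by
    rw [Real.exp_neg]; field_simp
  rw [heq, inv_div]
  gcongr
  linarith

lemma Tr_le_sqrt {u : ℝ} (hu : 0 < u) (hu1 : u ≤ 1) : Tr u ≤ 3 / Real.sqrt u := by
  set st := Real.sqrt u with hst
  have hst0 : 0 < st := Real.sqrt_pos.mpr hu
  have hstsq : st ^ 2 = u := Real.sq_sqrt hu.le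
  have hst1 : st ≤ 1 := by
    rw [hst]; exact Real.sqrt_le_one.mpr hu1
  have h1d : 1 ≤ 1 / st := by rw [le_div_iff₀ hst0]; linarith
  set N := ⌈1 / st⌉₊ with hN
  have hNge : 1 / st ≤ (N : ℝ) := Nat.le_ceil _
  have hNle : (N : ℝ) ≤ 2 / st := by
    have := Nat.ceil_lt_add_one (by positivity : (0:ℝ) ≤ 1 / st)
    have h' : (N:ℝ) < 1/st + 1 := this
    have h2 : (2:ℝ)/st = 1/st + 1/st := by ring
    rw [h2]; linarith
  have hN1 : (1:ℝ) ≤ (N:ℝ) := le_trans h1d hNge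
  have hsum := Tr_summable hu
  have hsplit := (Summable.sum_add_tsum_nat_add (f := fun k : ℕ => Real.exp (-(((k : ℝ) + 1) ^ 2 * u))) N hsum).symm
  -- head bound
  have hhead : (∑ k ∈ Finset.range N, Real.exp (-(((k : ℝ) + 1) ^ 2 * u))) ≤ (N:ℝ) := by
    calc (∑ k ∈ Finset.range N, Real.exp (-(((k : ℝ) + 1) ^ 2 * u)))
        ≤ ∑ k ∈ Finset.range N, 1 := by
          apply Finset.sum_le_sum
          intro k _
          apply Real.exp_le_one_iff.mpr
          have : (0:ℝ) ≤ ((k:ℝ)+1)^2 * u := by positivity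
          linarith
      _ = (N:ℝ) := by simp
  -- tail bound
  have htail : (∑' k : ℕ, Real.exp (-(((↑(k + N) : ℝ) + 1) ^ 2 * u))) ≤ 1 / st := by
    have hr0 : (0:ℝ) ≤ Real.exp (-((N:ℝ) * u)) := (Real.exp_pos _).le
    have hr1 : Real.exp (-((N:ℝ) * u)) < 1 :=
      Real.exp_lt_one_iff.mpr (by nlinarith)
    have hgsum : Summable (fun k : ℕ =>
        Real.exp (-((N:ℝ) * ((N:ℝ) + 1) * u)) * Real.exp (-((N:ℝ) * u)) ^ k) :=
      (summable_geometric_of_lt_one hr0 hr1).mul_left _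
    have hfsum : Summable (fun k : ℕ => Real.exp (-(((↑(k + N) : ℝ) + 1) ^ 2 * u))) := by
      have := hsum.comp_injective (add_left_injective N)
      exact this
    have hle : ∀ k : ℕ, Real.exp (-(((↑(k + N) : ℝ) + 1) ^ 2 * u)) ≤
        Real.exp (-((N:ℝ) * ((N:ℝ) + 1) * u)) * Real.exp (-((N:ℝ) * u)) ^ k := by
      intro k
      rw [← Real.exp_nat_mul, ← Real.exp_add]
      apply Real.exp_le_exp.mpr
      push_cast
      have hk : (0:ℝ) ≤ (k:ℝ) := Nat.cast_nonneg k
      nlinarith [mul_nonneg (mul_nonneg hk (by linarith : (0:ℝ) ≤ (k:ℝ)+1)) hu.le,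
        mul_nonneg (mul_nonneg hk (by linarith : (0:ℝ) ≤ (k:ℝ)+(N:ℝ)+1)) hu.le]
    calc (∑' k : ℕ, Real.exp (-(((↑(k + N) : ℝ) + 1) ^ 2 * u)))
        ≤ ∑' k : ℕ, Real.exp (-((N:ℝ) * ((N:ℝ) + 1) * u)) * Real.exp (-((N:ℝ) * u)) ^ k :=
          Summable.tsum_le_tsum hle hfsum hgsum
      _ = Real.exp (-((N:ℝ) * ((N:ℝ) + 1) * u)) * (1 - Real.exp (-((N:ℝ) * u)))⁻¹ := by
          rw [tsum_mul_left, tsum_geometric_of_lt_one hr0 hr1]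
      _ ≤ Real.exp (-((N:ℝ) * ((N:ℝ) + 1) * u)) * (Real.exp ((N:ℝ) * u) / ((N:ℝ) * u)) := by
          apply mul_le_mul_of_nonneg_left (inv_one_sub_exp_le (by nlinarith)) (Real.exp_pos _).le
      _ = Real.exp (-((N:ℝ) * (N:ℝ) * u)) / ((N:ℝ) * u) := by
          have harg : -((N:ℝ) * ((N:ℝ) + 1) * u) + (N:ℝ) * u = -((N:ℝ) * (N:ℝ) * u) := by ring
          rw [div_eq_mul_inv, ← mul_assoc, ← Real.exp_add, harg, div_eq_mul_inv]
      _ ≤ 1 / ((N:ℝ) * u) := by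
          gcongr
          exact Real.exp_le_one_iff.mpr (by nlinarith)
      _ ≤ 1 / st := by
          apply one_div_le_one_div_of_le hst0
          calc st = (1/st) * u := by
                field_simp
                nlinarith
            _ ≤ (N:ℝ) * u := by nlinarith
  rw [Tr, hsplit]
  calc (∑ k ∈ Finset.range N, Real.exp (-(((k : ℝ) + 1) ^ 2 * u)))
        + (∑' k : ℕ, Real.exp (-(((↑(k + N) : ℝ) + 1) ^ 2 * u)))
      ≤ (N:ℝ) + 1/st := add_le_add hhead htail
    _ ≤ 2/st + 1/st := by linarith
    _ = 3 / st := by ring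

lemma poly_bound {u : ℝ} (hu : 0 < u) :
    6 * Tr u * (1 + 2 * Tr u) ^ 2 ≤ 1458 / (u * Real.sqrt u) := by
  have hst0 : 0 < Real.sqrt u := Real.sqrt_pos.mpr hu
  have hstsq : Real.sqrt u ^ 2 = u := Real.sq_sqrt hu.le
  have ht0 : 0 ≤ Tr u := Tr_nonneg u
  rcases le_or_gt u 1 with hu1 | hu1
  · -- small u
    have ht : Tr u ≤ 3 / Real.sqrt u := Tr_le_sqrt hu hu1
    have hst1 : Real.sqrt u ≤ 1 := Real.sqrt_le_one.mpr hu1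
    set st := Real.sqrt u
    have hts : Tr u * st ≤ 3 := by
      rw [div_eq_mul_inv] at ht
      calc Tr u * st ≤ (3 * st⁻¹) * st := by
            apply mul_le_mul_of_nonneg_right ht hst0.le
        _ = 3 := by field_simp
    rw [le_div_iff₀ (by positivity)]
    have hexp : u * st = st ^ 3 := by
      rw [← hstsq]; ring
    rw [hexp]
    nlinarith [mul_nonneg ht0 hst0.le, sq_nonneg (Tr u * st), sq_nonneg st,
      mul_le_mul hts hts (by positivity) (by norm_num),
      mul_le_mul (mul_le_mul hts hts (by positivity) (by norm_num)) hts (by positivity) (by norm_num),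
      mul_le_mul_of_nonneg_right hts hst0.le, mul_le_mul_of_nonneg_right hst1 hst0.le]
  · -- large u
    have ht1 : Tr u ≤ 1 := le_trans (Tr_le_inv hu) (by rw [div_le_one hu]; linarith)
    have htc : Tr u ≤ 27 / u ^ 3 := Tr_le_cube hu
    have h2 : Tr u * Tr u ≤ Tr u := by nlinarith
    have h3 : Tr u * (Tr u * Tr u) ≤ Tr u := by nlinarith
    have h54 : 6 * Tr u * (1 + 2 * Tr u) ^ 2 ≤ 54 * Tr u := by nlinarith
    have hu3 : u * Real.sqrt u ≤ u ^ 3 := by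
      have h1 : Real.sqrt u ≤ u := by
        have := Real.sqrt_le_sqrt (by nlinarith : u ≤ u ^ 2)
        rwa [Real.sqrt_sq hu.le] at this
      calc u * Real.sqrt u ≤ u * u := by nlinarith
        _ ≤ u ^ 3 := by nlinarith
    calc 6 * Tr u * (1 + 2 * Tr u) ^ 2 ≤ 54 * Tr u := h54
      _ ≤ 54 * (27 / u ^ 3) := by linarith
      _ = 1458 / u ^ 3 := by ring
      _ ≤ 1458 / (u * Real.sqrt u) := by gcongr <;> positivity

noncomputable def we (u : ℝ) (k : ℤ) : ℝ≥0∞ := ENNReal.ofReal (Real.exp (-((k:ℝ)^2 * u)))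

noncomputable def ze (u : ℝ) (k : ℤ) : ℝ≥0∞ := if k = 0 then 0 else we u k

lemma tsum_we_le {u : ℝ} (hu : 0 < u) :
    ∑' k : ℤ, we u k ≤ ENNReal.ofReal (1 + 2 * Tr u) := by
  have hdec := tsum_of_nat_of_neg_add_one (f := we u) ENNReal.summable ENNReal.summable
  rw [hdec]
  have h1 : ∑' n : ℕ, we u ((n:ℤ)) = 1 + ENNReal.ofReal (Tr u) := by
    rw [tsum_eq_zero_add' ENNReal.summable]
    congr 1
    · simp [we]
    · rw [Tr, ENNReal.ofReal_tsum_of_nonneg (fun n => (Real.exp_pos _).le) (Tr_summable hu)]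
      apply tsum_congr
      intro n
      simp only [we]
      congr 2
      push_cast
      ring
  have h2 : ∑' n : ℕ, we u (-((n:ℤ) + 1)) = ENNReal.ofReal (Tr u) := by
    rw [Tr, ENNReal.ofReal_tsum_of_nonneg (fun n => (Real.exp_pos _).le) (Tr_summable hu)]
    apply tsum_congr
    intro n
    simp only [we]
    congr 2
    push_cast
    ring
  rw [h1, h2]
  have ht := Tr_nonneg u
  rw [ENNReal.ofReal_add (by norm_num) (by positivity), add_assoc]
  gcongr
  · exact le_of_eq (by simp)
  · rw [← ENNReal.ofReal_add (by positivity) (by positivity)]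
    apply ENNReal.ofReal_le_ofReal
    linarith

lemma tsum_ze_le {u : ℝ} (hu : 0 < u) :
    ∑' k : ℤ, ze u k ≤ ENNReal.ofReal (2 * Tr u) := by
  have hdec := tsum_of_nat_of_neg_add_one (f := ze u) ENNReal.summable ENNReal.summable
  rw [hdec]
  have h1 : ∑' n : ℕ, ze u ((n:ℤ)) = ENNReal.ofReal (Tr u) := by
    rw [tsum_eq_zero_add' ENNReal.summable]
    have h0 : ze u ((0:ℕ):ℤ) = 0 := by simp [ze]
    rw [h0, zero_add, Tr,
      ENNReal.ofReal_tsum_of_nonneg (fun n => (Real.exp_pos _).le) (Tr_summable hu)]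
    apply tsum_congr
    intro n
    have hne : ((n:ℤ) + 1) ≠ 0 := by positivity
    simp only [ze, we]
    rw [if_neg (by exact_mod_cast hne)]
    congr 2
    push_cast
    ring
  have h2 : ∑' n : ℕ, ze u (-((n:ℤ) + 1)) = ENNReal.ofReal (Tr u) := by
    rw [Tr, ENNReal.ofReal_tsum_of_nonneg (fun n => (Real.exp_pos _).le) (Tr_summable hu)]
    apply tsum_congr
    intro n
    have hne : (-((n:ℤ) + 1)) ≠ 0 := by
      intro h
      omega
    simp only [ze, we]
    rw [if_neg hne]
    congr 2
    push_cast
    ring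
  rw [h1, h2, ← ENNReal.ofReal_add (Tr_nonneg u) (Tr_nonneg u)]
  apply ENNReal.ofReal_le_ofReal
  linarith [Tr_nonneg u]

lemma tsum_triple (w1 w2 w3 : ℤ → ℝ≥0∞) :
    ∑' m : ℤ × ℤ × ℤ, (w1 m.1 * w2 m.2.1 * w3 m.2.2)
      = (∑' k, w1 k) * ((∑' k, w2 k) * (∑' k, w3 k)) := by
  rw [ENNReal.tsum_prod']
  calc ∑' (a : ℤ), ∑' (p : ℤ × ℤ), w1 a * w2 p.1 * w3 p.2
      = ∑' (a : ℤ), w1 a * ((∑' k, w2 k) * (∑' k, w3 k)) := by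
        apply tsum_congr; intro a
        rw [ENNReal.tsum_prod']
        calc ∑' (b : ℤ), ∑' (c : ℤ), w1 a * w2 b * w3 c
            = ∑' (b : ℤ), (w1 a * w2 b) * ∑' (c : ℤ), w3 c := by
              apply tsum_congr; intro b
              rw [ENNReal.tsum_mul_left]
          _ = w1 a * ((∑' k, w2 k) * (∑' k, w3 k)) := by
              rw [ENNReal.tsum_mul_right, ENNReal.tsum_mul_left, mul_assoc]
    _ = (∑' k, w1 k) * ((∑' k, w2 k) * (∑' k, w3 k)) := ENNReal.tsum_mul_right

noncomputable def q3 (m : ℤ × ℤ × ℤ) : ℝ := (m.1 : ℝ)^2 + (m.2.1 : ℝ)^2 + (m.2.2 : ℝ)^2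

lemma g3_factor (u : ℝ) (m : ℤ × ℤ × ℤ) :
    ENNReal.ofReal (Real.exp (-(q3 m * u))) = we u m.1 * we u m.2.1 * we u m.2.2 := by
  simp only [we, q3]
  rw [← ENNReal.ofReal_mul (Real.exp_pos _).le, ← ENNReal.ofReal_mul (by positivity),
    ← Real.exp_add, ← Real.exp_add]
  congr 2
  ring

lemma Se_le {u : ℝ} (hu : 0 < u) :
    (∑' m : {m : ℤ × ℤ × ℤ // m ≠ 0}, ENNReal.ofReal (Real.exp (-(q3 m.1 * u))))
      ≤ ENNReal.ofReal (1458 / (u * Real.sqrt u)) := by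
  have key : (∑' m : {m : ℤ × ℤ × ℤ // m ≠ 0}, ENNReal.ofReal (Real.exp (-(q3 m.1 * u))))
      ≤ ∑' m : ℤ × ℤ × ℤ, ((ze u m.1 * we u m.2.1 * we u m.2.2)
        + (we u m.1 * ze u m.2.1 * we u m.2.2)
        + (we u m.1 * we u m.2.1 * ze u m.2.2)) := by
    have e1 : (∑' m : {m : ℤ × ℤ × ℤ // m ≠ 0}, ENNReal.ofReal (Real.exp (-(q3 m.1 * u))))
        = ∑' m : ℤ × ℤ × ℤ, Set.indicator {m : ℤ × ℤ × ℤ | m ≠ 0}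
            (fun m => ENNReal.ofReal (Real.exp (-(q3 m * u)))) m :=
      tsum_subtype {m : ℤ × ℤ × ℤ | m ≠ 0} (fun m => ENNReal.ofReal (Real.exp (-(q3 m * u))))
    rw [e1]
    apply ENNReal.tsum_le_tsum
    intro m
    by_cases hm : m ≠ 0
    · rw [Set.indicator_of_mem (by exact hm)]
      rw [g3_factor]
      have hcoord : m.1 ≠ 0 ∨ m.2.1 ≠ 0 ∨ m.2.2 ≠ 0 := by
        by_contra h
        push_neg at h
        exact hm (by ext <;> simp [h.1, h.2.1, h.2.2])
      rcases hcoord with h | h | h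
      · calc we u m.1 * we u m.2.1 * we u m.2.2
            = ze u m.1 * we u m.2.1 * we u m.2.2 := by rw [ze, if_neg h]
          _ ≤ _ := by
              exact le_add_of_le_of_nonneg (le_add_of_le_of_nonneg le_rfl zero_le) zero_le
      · calc we u m.1 * we u m.2.1 * we u m.2.2
            = we u m.1 * ze u m.2.1 * we u m.2.2 := by rw [ze, if_neg h]
          _ ≤ _ := by
              exact le_add_of_le_of_nonneg (le_add_of_nonneg_of_le zero_le le_rfl) zero_le
      · calc we u m.1 * we u m.2.1 * we u m.2.2
            = we u m.1 * we u m.2.1 * ze u m.2.2 := by rw [ze, if_neg h]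
          _ ≤ _ := le_add_of_nonneg_of_le zero_le le_rfl
    · push_neg at hm
      rw [Set.indicator_of_notMem (by simp [hm])]
      exact zero_le
  rw [ENNReal.tsum_add, ENNReal.tsum_add] at key
  rw [tsum_triple, tsum_triple, tsum_triple] at key
  set Z := ∑' k, ze u k
  set W := ∑' k, we u k
  have hZ : Z ≤ ENNReal.ofReal (2 * Tr u) := tsum_ze_le hu
  have hW : W ≤ ENNReal.ofReal (1 + 2 * Tr u) := tsum_we_le hu
  have ht := Tr_nonneg u
  have hbound : Z * (W * W) + W * (Z * W) + W * (W * Z)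
      ≤ ENNReal.ofReal (6 * Tr u * (1 + 2 * Tr u)^2) := by
    have hone : ENNReal.ofReal (6 * Tr u * (1 + 2 * Tr u)^2)
        = ENNReal.ofReal (2 * Tr u) * (ENNReal.ofReal (1 + 2 * Tr u) * ENNReal.ofReal (1 + 2 * Tr u))
          + ENNReal.ofReal (2 * Tr u) * (ENNReal.ofReal (1 + 2 * Tr u) * ENNReal.ofReal (1 + 2 * Tr u))
          + ENNReal.ofReal (2 * Tr u) * (ENNReal.ofReal (1 + 2 * Tr u) * ENNReal.ofReal (1 + 2 * Tr u)) := by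
      rw [← ENNReal.ofReal_mul (by positivity), ← ENNReal.ofReal_mul (by positivity),
        ← ENNReal.ofReal_add (by positivity) (by positivity),
        ← ENNReal.ofReal_add (by positivity) (by positivity)]
      congr 1
      ring
    rw [hone]
    have hre : Z * (W * W) + W * (Z * W) + W * (W * Z)
        = Z * (W * W) + Z * (W * W) + Z * (W * W) := by ring
    rw [hre]
    gcongr <;> assumption
  calc (∑' m : {m : ℤ × ℤ × ℤ // m ≠ 0}, ENNReal.ofReal (Real.exp (-(q3 m.1 * u))))
      ≤ Z * (W * W) + W * (Z * W) + W * (W * Z) := key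
    _ ≤ ENNReal.ofReal (6 * Tr u * (1 + 2 * Tr u)^2) := hbound
    _ ≤ ENNReal.ofReal (1458 / (u * Real.sqrt u)) :=
        ENNReal.ofReal_le_ofReal (poly_bound hu)

lemma geom_summable {n s : ℝ} (hn : 1 ≤ n) (hs : 0 < s) :
    Summable (fun j : ℕ => s * Real.exp (-(n * (((j:ℝ) + 1) * s)))) := by
  have heq : (fun j : ℕ => s * Real.exp (-(n * (((j:ℝ) + 1) * s))))
      = fun j : ℕ => s * Real.exp (-(n * s)) ^ (j + 1) := by
    funext j
    rw [← Real.exp_nat_mul]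
    congr 1
    push_cast
    ring_nf
  rw [heq]
  have hr0 : (0:ℝ) ≤ Real.exp (-(n * s)) := (Real.exp_pos _).le
  have hr1 : Real.exp (-(n * s)) < 1 := Real.exp_lt_one_iff.mpr (by nlinarith)
  exact ((summable_geometric_of_lt_one hr0 hr1).comp_injective (add_left_injective 1)).mul_left s

lemma geom_step {n s : ℝ} (hn : 1 ≤ n) (hs : 0 < s) :
    Real.exp (-(n * s)) / n ≤ ∑' j : ℕ, s * Real.exp (-(n * (((j:ℝ) + 1) * s))) := by
  have heq : (fun j : ℕ => s * Real.exp (-(n * (((j:ℝ) + 1) * s))))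
      = fun j : ℕ => s * Real.exp (-(n * s)) ^ (j + 1) := by
    funext j
    rw [← Real.exp_nat_mul]
    congr 1
    push_cast
    ring_nf
  rw [heq]
  have hr0 : (0:ℝ) ≤ Real.exp (-(n * s)) := (Real.exp_pos _).le
  have hrpos : (0:ℝ) < Real.exp (-(n * s)) := Real.exp_pos _
  have hr1 : Real.exp (-(n * s)) < 1 := Real.exp_lt_one_iff.mpr (by nlinarith)
  rw [tsum_mul_left, tsum_geom_shift hr0 hr1]
  set r := Real.exp (-(n * s))
  have h1r : 0 < 1 - r := by linarith
  have hub : 1 - r ≤ n * s := by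
    have := Real.add_one_le_exp (-(n * s))
    simp only [r]
    linarith
  rw [div_le_iff₀ (by linarith : (0:ℝ) < n)]
  have key : r * (1 - r) ≤ r * (n * s) := mul_le_mul_of_nonneg_left hub hrpos.le
  have hre : s * (r / (1 - r)) * n = r * (n * s) / (1 - r) := by ring
  rw [hre, le_div_iff₀ h1r]
  linarith

lemma q3_nonneg (m : ℤ × ℤ × ℤ) : 0 ≤ q3 m := by unfold q3; positivity

lemma znorm_sq (m : ℤ × ℤ × ℤ) : znorm m ^ 2 = q3 m := Real.sq_sqrt (q3_nonneg m)

lemma one_le_q3 {m : ℤ × ℤ × ℤ} (hm : m ≠ 0) : 1 ≤ q3 m := by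
  have hcoord : m.1 ≠ 0 ∨ m.2.1 ≠ 0 ∨ m.2.2 ≠ 0 := by
    by_contra h
    push_neg at h
    exact hm (by ext <;> simp [h.1, h.2.1, h.2.2])
  have key : ∀ k : ℤ, k ≠ 0 → (1:ℝ) ≤ (k:ℝ)^2 := by
    intro k hk
    have h1 : 1 ≤ |k| := Int.one_le_abs hk
    have h2 : (1:ℝ) ≤ |(k:ℝ)| := by exact_mod_cast h1
    nlinarith [abs_nonneg (k:ℝ), sq_abs (k:ℝ)]
  unfold q3
  rcases hcoord with h | h | h
  · nlinarith [key _ h, sq_nonneg ((m.2.1:ℝ)), sq_nonneg ((m.2.2:ℝ))]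
  · nlinarith [key _ h, sq_nonneg ((m.1:ℝ)), sq_nonneg ((m.2.2:ℝ))]
  · nlinarith [key _ h, sq_nonneg ((m.1:ℝ)), sq_nonneg ((m.2.1:ℝ))]

lemma G_summable : Summable (fun j : ℕ => 1 / (((j:ℝ) + 1) * Real.sqrt ((j:ℝ) + 1))) := by
  have h1 : Summable (fun n : ℕ => 1 / (n:ℝ) ^ (3/2 : ℝ)) :=
    Real.summable_one_div_nat_rpow.mpr (by norm_num)
  have h2 : Summable (fun j : ℕ => 1 / ((j:ℝ) + 1) ^ (3/2 : ℝ)) := by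
    have := (summable_nat_add_iff 1).mpr h1
    apply this.congr
    intro j
    push_cast
    norm_num
  apply h2.congr
  intro j
  have hx : (0:ℝ) < (j:ℝ) + 1 := by positivity
  rw [show (3/2 : ℝ) = 1 + 1/2 by norm_num, Real.rpow_add hx, Real.rpow_one,
    ← Real.sqrt_eq_rpow]

theorem stmt10 :
    ∃ c > 0, ∀ s ∈ Set.Ioc (0:ℝ) 1,
      (∑' m : {m : ℤ × ℤ × ℤ // m ≠ 0},
          ENNReal.ofReal (Real.exp (-(znorm m ^ 2 * s)) / znorm m ^ 2)) ≤
        ENNReal.ofReal (c * s ^ (-(1/2 : ℝ))) := by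
  set G := ∑' j : ℕ, 1 / (((j:ℝ) + 1) * Real.sqrt ((j:ℝ) + 1)) with hGdef
  have hG0 : 0 ≤ G := tsum_nonneg (fun j => by positivity)
  refine ⟨1458 * G + 1, by positivity, ?_⟩
  rintro s ⟨hs0, hs1⟩
  have hss : 0 < Real.sqrt s := Real.sqrt_pos.mpr hs0
  -- Step 1+2: pointwise geometric expansion then swap
  have step12 : (∑' m : {m : ℤ × ℤ × ℤ // m ≠ 0},
        ENNReal.ofReal (Real.exp (-(znorm m ^ 2 * s)) / znorm m ^ 2))
      ≤ ∑' j : ℕ, ∑' m : {m : ℤ × ℤ × ℤ // m ≠ 0},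
          ENNReal.ofReal (s * Real.exp (-(q3 m.1 * (((j:ℝ) + 1) * s)))) := by
    rw [← ENNReal.tsum_comm]
    apply ENNReal.tsum_le_tsum
    intro m
    have hq := one_le_q3 m.2
    rw [znorm_sq]
    calc ENNReal.ofReal (Real.exp (-(q3 m.1 * s)) / q3 m.1)
        ≤ ENNReal.ofReal (∑' j : ℕ, s * Real.exp (-(q3 m.1 * (((j:ℝ) + 1) * s)))) :=
          ENNReal.ofReal_le_ofReal (geom_step hq hs0)
      _ = ∑' j : ℕ, ENNReal.ofReal (s * Real.exp (-(q3 m.1 * (((j:ℝ) + 1) * s)))) :=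
          ENNReal.ofReal_tsum_of_nonneg (fun j => by positivity) (geom_summable hq hs0)
  -- Step 3+4: bound each inner sum
  have step34 : ∀ j : ℕ, (∑' m : {m : ℤ × ℤ × ℤ // m ≠ 0},
        ENNReal.ofReal (s * Real.exp (-(q3 m.1 * (((j:ℝ) + 1) * s)))))
      ≤ ENNReal.ofReal ((1458 / Real.sqrt s) * (1 / (((j:ℝ) + 1) * Real.sqrt ((j:ℝ) + 1)))) := by
    intro j
    set u := ((j:ℝ) + 1) * s with hu
    have hu0 : 0 < u := by positivity
    have h3 : (∑' m : {m : ℤ × ℤ × ℤ // m ≠ 0},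
          ENNReal.ofReal (s * Real.exp (-(q3 m.1 * u))))
        = ENNReal.ofReal s * ∑' m : {m : ℤ × ℤ × ℤ // m ≠ 0},
            ENNReal.ofReal (Real.exp (-(q3 m.1 * u))) := by
      rw [← ENNReal.tsum_mul_left]
      apply tsum_congr
      intro m
      rw [← ENNReal.ofReal_mul hs0.le]
    rw [h3]
    calc ENNReal.ofReal s * ∑' m : {m : ℤ × ℤ × ℤ // m ≠ 0},
            ENNReal.ofReal (Real.exp (-(q3 m.1 * u)))
        ≤ ENNReal.ofReal s * ENNReal.ofReal (1458 / (u * Real.sqrt u)) := by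
          exact mul_le_mul_right (Se_le hu0) _
      _ = ENNReal.ofReal (s * (1458 / (u * Real.sqrt u))) := by
          rw [← ENNReal.ofReal_mul hs0.le]
      _ = ENNReal.ofReal ((1458 / Real.sqrt s) * (1 / (((j:ℝ) + 1) * Real.sqrt ((j:ℝ) + 1)))) := by
          congr 1
          have hj0 : (0:ℝ) < (j:ℝ) + 1 := by positivity
          have hsqs : Real.sqrt s ^ 2 = s := Real.sq_sqrt hs0.le
          have hsqj : Real.sqrt ((j:ℝ) + 1) ^ 2 = (j:ℝ) + 1 := Real.sq_sqrt hj0.le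
          have hsj : 0 < Real.sqrt ((j:ℝ) + 1) := Real.sqrt_pos.mpr hj0
          rw [hu, Real.sqrt_mul hj0.le]
          rw [← hsqs, ← hsqj]
          field_simp
  -- Combine
  calc (∑' m : {m : ℤ × ℤ × ℤ // m ≠ 0},
        ENNReal.ofReal (Real.exp (-(znorm m ^ 2 * s)) / znorm m ^ 2))
      ≤ ∑' j : ℕ, ∑' m : {m : ℤ × ℤ × ℤ // m ≠ 0},
          ENNReal.ofReal (s * Real.exp (-(q3 m.1 * (((j:ℝ) + 1) * s)))) := step12
    _ ≤ ∑' j : ℕ, ENNReal.ofReal ((1458 / Real.sqrt s) * (1 / (((j:ℝ) + 1) * Real.sqrt ((j:ℝ) + 1)))) :=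
        ENNReal.tsum_le_tsum step34
    _ = ENNReal.ofReal (1458 / Real.sqrt s) * ∑' j : ℕ,
          ENNReal.ofReal (1 / (((j:ℝ) + 1) * Real.sqrt ((j:ℝ) + 1))) := by
        rw [← ENNReal.tsum_mul_left]
        apply tsum_congr
        intro j
        rw [← ENNReal.ofReal_mul (by positivity)]
    _ = ENNReal.ofReal (1458 / Real.sqrt s) * ENNReal.ofReal G := by
        rw [hGdef, ENNReal.ofReal_tsum_of_nonneg (fun j => by positivity) G_summable]
    _ = ENNReal.ofReal ((1458 / Real.sqrt s) * G) := by
        rw [← ENNReal.ofReal_mul (by positivity)]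
    _ ≤ ENNReal.ofReal ((1458 * G + 1) * s ^ (-(1/2 : ℝ))) := by
        apply ENNReal.ofReal_le_ofReal
        have hrw : s ^ (-(1/2 : ℝ)) = (Real.sqrt s)⁻¹ := by
          rw [Real.rpow_neg hs0.le, Real.sqrt_eq_rpow]
        rw [hrw]
        have h1 : 1458 / Real.sqrt s * G = (1458 * G) * (Real.sqrt s)⁻¹ := by ring
        rw [h1]
        apply mul_le_mul_of_nonneg_right (by linarith) (by positivity)
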